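/- arXiv:2604.17954 — 2 statements merged into one kernel-verified Lean document; each statement's English description precedes it below -/
import Mathlib

section
/- Complex change-of-variables (pushforward density) formula for the complex normalizing flow: let Ψ : ℂ^d → ℂ^d be a holomorphic bijection whose ℂ-linear derivative DΨ(z) is invertible at every z (equivalently det J_Ψ(z) ≠ 0 everywhere, where J_Ψ(z) is the complex Jacobian matrix), and let q₀ : ℂ^d → ℝ≥0∞ be measurable. Then the pushforward under Ψ of the measure with density q₀ with respect to Lebesgue measure is the measure with density w ↦ q₀(Ψ⁻¹(w)) / ENNReal.ofReal(Complex.normSq(det J_Ψ(Ψ⁻¹(w)))): Measure.map Ψ (volume.withDensity q₀) = volume.withDensity (fun w => q₀(Ψ⁻¹ w) / ENNReal.ofReal (normSq (det J_Ψ(Ψ⁻¹ w)))). -/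
open MeasureTheory

noncomputable instance (d : ℕ) : MeasurableSpace (EuclideanSpace ℂ (Fin d)) := borel _
instance (d : ℕ) : BorelSpace (EuclideanSpace ℂ (Fin d)) := ⟨rfl⟩

/-- The complex Jacobian matrix of a map `Ψ : ℂ^d → ℂ^d` at `z`: the matrix of the
ℂ-linear Fréchet derivative `fderiv ℂ Ψ z` in the standard basis. -/
noncomputable def complexJacobian (d : ℕ)
    (Ψ : EuclideanSpace ℂ (Fin d) → EuclideanSpace ℂ (Fin d))
    (z : EuclideanSpace ℂ (Fin d)) : Matrix (Fin d) (Fin d) ℂ :=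
  Matrix.of fun i j => fderiv ℂ Ψ z (EuclideanSpace.single j (1 : ℂ)) i

noncomputable instance matMS (d : ℕ) : MeasurableSpace (Matrix (Fin d) (Fin d) ℂ) :=
  inferInstanceAs (MeasurableSpace (Fin d → Fin d → ℂ))
instance matBS (d : ℕ) : BorelSpace (Matrix (Fin d) (Fin d) ℂ) :=
  inferInstanceAs (BorelSpace (Fin d → Fin d → ℂ))

section aux


lemma det_one_add_of_isNilpotent {n : Type*} [Fintype n] [DecidableEq n]
    {N : Matrix n n ℝ} (hN : IsNilpotent N) : (1 + N).det = 1 := by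
  have hc : N.charpoly = Polynomial.X ^ Fintype.card n := by
    have h := N.isNilpotent_charpoly_sub_pow_of_isNilpotent hN
    have := h.eq_zero
    rwa [sub_eq_zero] at this
  have h1 : Polynomial.eval (-1 : ℝ) N.charpoly = (-1) ^ Fintype.card n := by
    rw [hc]; simp
  have h2 : Polynomial.eval (-1 : ℝ) N.charpoly = (-1 : ℝ) ^ Fintype.card n * (1 + N).det := by
    rw [Matrix.charpoly, _root_.eval_det, Matrix.matPolyEquiv_charmatrix]
    rw [Polynomial.eval_sub, Polynomial.eval_X, Polynomial.eval_C]
    have : Matrix.scalar n (-1 : ℝ) - N = -(1 + N) := by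
      rw [map_neg, _root_.map_one, neg_add, sub_eq_add_neg]
    rw [this, Matrix.det_neg]
  have h3 : (-1 : ℝ) ^ Fintype.card n * (1 + N).det = (-1 : ℝ) ^ Fintype.card n * 1 := by
    rw [← h2, h1, mul_one]
  exact mul_left_cancel₀ (pow_ne_zero _ (by norm_num)) h3


noncomputable def realify (d : ℕ) :
    Matrix (Fin d) (Fin d) ℂ →ₐ[ℝ] Matrix (Fin 2 × Fin d) (Fin 2 × Fin d) ℝ :=
  ((Matrix.reindexAlgEquiv ℝ ℝ (Equiv.prodComm (Fin d) (Fin 2))).toAlgHom.comp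
    (Matrix.compAlgEquiv (Fin d) (Fin 2) ℝ ℝ).toAlgHom).comp
    (AlgHom.mapMatrix (Algebra.leftMulMatrix Complex.basisOneI))

lemma realify_apply (d : ℕ) (M : Matrix (Fin d) (Fin d) ℂ) (i j : Fin 2) (k l : Fin d) :
    realify d M (i, k) (j, l) = Algebra.leftMulMatrix Complex.basisOneI (M k l) i j := by
  simp [realify, Matrix.compAlgEquiv_apply, Matrix.reindexAlgEquiv_apply,
    Matrix.reindex_apply, Matrix.submatrix_apply, Matrix.comp_apply]

lemma realify_det (d : ℕ) (M : Matrix (Fin d) (Fin d) ℂ) :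
    (realify d M).det = Complex.normSq M.det := by
  refine Matrix.diagonal_transvection_induction
    (fun A => (realify d A).det = Complex.normSq A.det) M (fun D _ => ?_) (fun t => ?_)
    (fun A B hA hB => ?_)
  · show ((realify d) (Matrix.diagonal D)).det = Complex.normSq (Matrix.diagonal D).det
    have h : realify d (Matrix.diagonal D) =
        Matrix.blockDiagonal (fun k => Algebra.leftMulMatrix Complex.basisOneI (D k)) := by
      ext ⟨i, k⟩ ⟨j, l⟩
      rw [realify_apply, Matrix.blockDiagonal_apply]
      by_cases hkl : k = l
      · subst hkl; simp [Matrix.diagonal_apply_eq]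
      · simp [Matrix.diagonal_apply_ne _ hkl, hkl]
    rw [h, Matrix.det_blockDiagonal, Matrix.det_diagonal, map_prod]
    refine Finset.prod_congr rfl fun k _ => ?_
    rw [← Algebra.norm_eq_matrix_det Complex.basisOneI (D k), Algebra.norm_complex_apply]
  · show ((realify d) t.toMatrix).det = Complex.normSq t.toMatrix.det
    have hdet : t.toMatrix.det = 1 := by
      rw [Matrix.TransvectionStruct.toMatrix, Matrix.det_transvection_of_ne _ _ t.hij]
    rw [hdet]
    have h1 : t.toMatrix = 1 + t.c • Matrix.single t.i t.j (1 : ℂ) := by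
      rw [Matrix.TransvectionStruct.toMatrix, Matrix.transvection, Matrix.smul_single,
        smul_eq_mul, mul_one]
    have hnil : IsNilpotent (realify d (t.c • Matrix.single t.i t.j (1 : ℂ))) := by
      refine ⟨2, ?_⟩
      rw [sq, ← _root_.map_mul, smul_mul_assoc, Matrix.mul_smul,
        Matrix.single_mul_single_of_ne (h := t.hij.symm), smul_zero, smul_zero, map_zero]
    rw [h1, map_add, _root_.map_one, det_one_add_of_isNilpotent hnil]
    simp
  · show ((realify d) (A * B)).det = Complex.normSq (A * B).det
    rw [_root_.map_mul, Matrix.det_mul, Matrix.det_mul, _root_.map_mul, hA, hB]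

noncomputable def cb (d : ℕ) : Module.Basis (Fin d) ℂ (EuclideanSpace ℂ (Fin d)) :=
  (EuclideanSpace.basisFun (Fin d) ℂ).toBasis

lemma toMatrix_restrict (d : ℕ)
    (f : EuclideanSpace ℂ (Fin d) →ₗ[ℂ] EuclideanSpace ℂ (Fin d)) :
    LinearMap.toMatrix (Complex.basisOneI.smulTower (cb d)) (Complex.basisOneI.smulTower (cb d))
      (f.restrictScalars ℝ) = realify d (LinearMap.toMatrix (cb d) (cb d) f) := by
  ext ⟨i, k⟩ ⟨j, l⟩
  rw [LinearMap.toMatrix_apply, realify_apply, Module.Basis.smulTower_apply, Module.Basis.smulTower_repr]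
  show Complex.basisOneI.repr ((cb d).repr (f (Complex.basisOneI j • cb d l)) k) i = _
  rw [_root_.map_smul, _root_.map_smul, Finsupp.smul_apply, Algebra.leftMulMatrix_eq_repr_mul,
    LinearMap.toMatrix_apply, smul_eq_mul, mul_comm]

lemma det_restrictScalars' (d : ℕ)
    (f : EuclideanSpace ℂ (Fin d) →ₗ[ℂ] EuclideanSpace ℂ (Fin d)) :
    LinearMap.det (f.restrictScalars ℝ) = Complex.normSq (LinearMap.det f) := by
  rw [← LinearMap.det_toMatrix (Complex.basisOneI.smulTower (cb d)), toMatrix_restrict,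
    realify_det, ← LinearMap.det_toMatrix (cb d) f]

lemma map_withDensity_comp {α β : Type*} [MeasurableSpace α] [MeasurableSpace β]
    {f : α → β} (hf : Measurable f) {g : β → ENNReal} (hg : Measurable g) (ν : Measure α) :
    Measure.map f (ν.withDensity (g ∘ f)) = (Measure.map f ν).withDensity g := by
  ext s hs
  rw [Measure.map_apply hf hs, withDensity_apply _ hs, withDensity_apply _ (hf hs),
    setLIntegral_map hs hg hf]
  rfl

end aux

/-- **complex change-of-variables / pushforward density formula.**
Let `Ψ : ℂ^d → ℂ^d` be a holomorphic bijection (ℂ-differentiable everywhere) whose complex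
Jacobian determinant never vanishes, and `q₀ : ℂ^d → ℝ≥0∞` measurable.  Then the
pushforward under `Ψ` of the measure with density `q₀` w.r.t. Lebesgue measure is the
measure with density
`w ↦ q₀ (Ψ⁻¹ w) / ENNReal.ofReal (normSq (det J_Ψ (Ψ⁻¹ w)))`. -/
theorem stmt8 (d : ℕ)
    (Ψ : EuclideanSpace ℂ (Fin d) → EuclideanSpace ℂ (Fin d))
    (hΨ : ∀ z, DifferentiableAt ℂ Ψ z)
    (hbij : Function.Bijective Ψ)
    (hdet : ∀ z, (complexJacobian d Ψ z).det ≠ 0)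
    (q₀ : EuclideanSpace ℂ (Fin d) → ENNReal)
    (hq₀ : Measurable q₀) :
    Measure.map Ψ (volume.withDensity q₀) =
      volume.withDensity (fun w =>
        q₀ (Function.invFun Ψ w) /
          ENNReal.ofReal (Complex.normSq ((complexJacobian d Ψ (Function.invFun Ψ w)).det))) := by
  classical
  have hdiff : Differentiable ℂ Ψ := fun z => hΨ z
  have hcont : Continuous Ψ := hdiff.continuous
  have hmeas : Measurable Ψ := hcont.measurable
  have hemb : MeasurableEmbedding Ψ := hcont.measurableEmbedding hbij.injective
  have hinv : Measurable (Function.invFun Ψ) := by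
    intro s hs
    have h : Function.invFun Ψ ⁻¹' s = Ψ '' s := by
      ext w
      constructor
      · intro hw
        exact ⟨Function.invFun Ψ w, hw, Function.rightInverse_invFun hbij.2 w⟩
      · rintro ⟨x, hx, rfl⟩
        rwa [Set.mem_preimage, Function.leftInverse_invFun hbij.1 x]
    rw [h]
    exact hemb.measurableSet_image.2 hs
  set ρ : EuclideanSpace ℂ (Fin d) → ENNReal :=
    fun z => ENNReal.ofReal (Complex.normSq ((complexJacobian d Ψ z).det)) with hρdef
  have hJm : Measurable fun z => (complexJacobian d Ψ z).det := by
    have h1 : Measurable fun z => complexJacobian d Ψ z := by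
      refine measurable_pi_lambda _ fun i => measurable_pi_lambda _ fun j => ?_
      have h2 : Measurable fun z => fderiv ℂ Ψ z (EuclideanSpace.single j (1 : ℂ)) :=
        measurable_fderiv_apply_const ℂ Ψ _
      have h3 : Continuous fun (v : EuclideanSpace ℂ (Fin d)) => v i :=
        (continuous_apply i).comp (PiLp.continuousLinearEquiv 2 ℂ _).continuous
      exact h3.measurable.comp h2
    exact (Continuous.matrix_det continuous_id).measurable.comp h1
  have hρm : Measurable ρ :=
    ENNReal.measurable_ofReal.comp (Complex.continuous_normSq.measurable.comp hJm)
  have hρ0 : ∀ z, ρ z ≠ 0 := fun z =>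
    (ENNReal.ofReal_pos.mpr (Complex.normSq_pos.mpr (hdet z))).ne'
  have hρtop : ∀ z, ρ z ≠ ⊤ := fun z => ENNReal.ofReal_ne_top
  have hJac : ∀ z, (fderiv ℝ Ψ z).det = Complex.normSq ((complexJacobian d Ψ z).det) := by
    intro z
    have h1 : fderiv ℝ Ψ z = (fderiv ℂ Ψ z).restrictScalars ℝ :=
      (hΨ z).fderiv_restrictScalars ℝ
    have h2 : complexJacobian d Ψ z =
        LinearMap.toMatrix (cb d) (cb d) ((fderiv ℂ Ψ z).toLinearMap) := by
      ext i j
      rw [LinearMap.toMatrix_apply]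
      simp only [cb, OrthonormalBasis.coe_toBasis, OrthonormalBasis.coe_toBasis_repr_apply,
        EuclideanSpace.basisFun_apply, EuclideanSpace.basisFun_repr, complexJacobian,
        Matrix.of_apply, ContinuousLinearMap.coe_coe]
    have h3 : (fderiv ℝ Ψ z).toLinearMap
        = LinearMap.restrictScalars ℝ (fderiv ℂ Ψ z).toLinearMap := by
      rw [h1]; rfl
    show LinearMap.det (fderiv ℝ Ψ z).toLinearMap = _
    rw [h3, det_restrictScalars', h2, LinearMap.det_toMatrix]
  have key : Measure.map Ψ (volume.withDensity ρ) = volume := by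
    have h0 := map_withDensity_abs_det_fderiv_eq_addHaar (volume)
        (MeasurableSet.univ (α := EuclideanSpace ℂ (Fin d)))
        (f' := fun z => fderiv ℝ Ψ z)
        (fun x _ => ((hΨ x).restrictScalars ℝ).hasFDerivAt.hasFDerivWithinAt)
        hbij.injective.injOn
    rw [Measure.restrict_univ, Set.image_univ, Set.range_eq_univ.mpr hbij.2,
      Measure.restrict_univ] at h0
    have hfun : (fun x => ENNReal.ofReal |(fderiv ℝ Ψ x).det|) = ρ := by
      funext z
      show ENNReal.ofReal |(fderiv ℝ Ψ z).det|
          = ENNReal.ofReal (Complex.normSq ((complexJacobian d Ψ z).det))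
      rw [← hJac z, abs_of_nonneg (by rw [hJac z]; exact Complex.normSq_nonneg _)]
    rw [hfun] at h0
    exact h0
  set D : EuclideanSpace ℂ (Fin d) → ENNReal :=
    fun w => q₀ (Function.invFun Ψ w) / ρ (Function.invFun Ψ w) with hDdef
  have hDm : Measurable D := (hq₀.comp hinv).div (hρm.comp hinv)
  have hcomp : D ∘ Ψ = fun z => q₀ z / ρ z := by
    funext z
    simp only [hDdef, Function.comp_apply, Function.leftInverse_invFun hbij.1 z]
  show Measure.map Ψ (volume.withDensity q₀) = volume.withDensity D
  calc Measure.map Ψ (volume.withDensity q₀)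
      = Measure.map Ψ (volume.withDensity (ρ * fun z => q₀ z / ρ z)) := by
        have hq : (ρ * fun z => q₀ z / ρ z) = q₀ := by
          funext z
          rw [Pi.mul_apply, ENNReal.mul_div_cancel (hρ0 z) (hρtop z)]
        rw [hq]
    _ = Measure.map Ψ ((volume.withDensity ρ).withDensity (fun z => q₀ z / ρ z)) := by
        rw [withDensity_mul _ hρm (g := fun z => q₀ z / ρ z) (hq₀.div hρm)]
    _ = Measure.map Ψ ((volume.withDensity ρ).withDensity (D ∘ Ψ)) := by rw [hcomp]
    _ = (Measure.map Ψ (volume.withDensity ρ)).withDensity D :=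
        map_withDensity_comp hmeas hDm _
    _ = volume.withDensity D := by rw [key]
end

section
/- Instantaneous change of variables in flat space (material derivative of the log-density along the flow): let q : ℝ^n × ℝ → ℝ be everywhere positive and continuously differentiable, let X : ℝ^n × ℝ → ℝ^n be continuously differentiable in the space variable, and suppose the continuity equation holds pointwise: ∂q/∂t(x,t) + div_x (q(·,t)·X(·,t))(x) = 0 for all (x,t), where div_x is the spatial divergence (trace of the spatial Fréchet derivative). Let Z : ℝ → ℝ^n be differentiable with Z′(t) = X(Z(t), t) for all t. Then the function t ↦ Real.log (q(Z(t), t)) is differentiable, with derivative at each t equal to −(div_x X(·,t))(Z(t)). -/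
/-- The divergence of a vector field `V : ℝ^n → ℝ^n` at `x`: the trace of its Fréchet
derivative at `x`. -/
noncomputable def divergence (n : ℕ)
    (V : EuclideanSpace ℝ (Fin n) → EuclideanSpace ℝ (Fin n))
    (x : EuclideanSpace ℝ (Fin n)) : ℝ :=
  LinearMap.trace ℝ (EuclideanSpace ℝ (Fin n)) (fderiv ℝ V x).toLinearMap

lemma trace_smulRight {E : Type*} [NormedAddCommGroup E] [NormedSpace ℝ E]
    [FiniteDimensional ℝ E] (f : E →ₗ[ℝ] ℝ) (v : E) :
    LinearMap.trace ℝ E (LinearMap.smulRight f v) = f v := by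
  let b := Module.finBasis ℝ E
  rw [LinearMap.trace_eq_matrix_trace ℝ b, Matrix.trace]
  have : f v = ∑ i, b.repr v i * f (b i) := by
    conv_lhs => rw [← b.sum_repr v]
    simp only [map_sum, map_smul, smul_eq_mul]
  rw [this]
  refine Finset.sum_congr rfl fun i _ => ?_
  simp [LinearMap.toMatrix_apply, Matrix.diag, mul_comm]

lemma divergence_smul (n : ℕ) (f : EuclideanSpace ℝ (Fin n) → ℝ)
    (V : EuclideanSpace ℝ (Fin n) → EuclideanSpace ℝ (Fin n))
    (x : EuclideanSpace ℝ (Fin n))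
    (hf : DifferentiableAt ℝ f x) (hV : DifferentiableAt ℝ V x) :
    divergence n (fun y => f y • V y) x
      = fderiv ℝ f x (V x) + f x * divergence n V x := by
  have h := hf.hasFDerivAt.smul hV.hasFDerivAt
  unfold divergence
  rw [show (fun y => f y • V y) = f • V from rfl, h.fderiv]
  have : ((f x • fderiv ℝ V x + (fderiv ℝ f x).smulRight (V x)).toLinearMap)
      = f x • (fderiv ℝ V x).toLinearMap
        + LinearMap.smulRight (fderiv ℝ f x).toLinearMap (V x) := by
    ext y; simp
  rw [this, map_add, LinearMap.map_smul, trace_smulRight, smul_eq_mul]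
  simp
  ring

/-- **instantaneous change of variables in flat space.**  Let
`q : ℝ^n × ℝ → ℝ` be everywhere positive and `C¹`, `X : ℝ^n × ℝ → ℝ^n` be `C¹` in the
space variable, and suppose the continuity equation
`∂q/∂t (x,t) + div_x (q(·,t) • X(·,t)) (x) = 0` holds pointwise.  If `Z : ℝ → ℝ^n` solves
`Z′(t) = X (Z t, t)`, then `t ↦ log (q (Z t, t))` is differentiable with derivative
`−(div_x X(·,t)) (Z t)` at each `t`. -/
theorem stmt13 (n : ℕ)
    (q : EuclideanSpace ℝ (Fin n) × ℝ → ℝ)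
    (hqpos : ∀ p, 0 < q p)
    (hq : ContDiff ℝ 1 q)
    (X : EuclideanSpace ℝ (Fin n) × ℝ → EuclideanSpace ℝ (Fin n))
    (hX : ∀ t, ContDiff ℝ 1 (fun x => X (x, t)))
    (hcont : ∀ (x : EuclideanSpace ℝ (Fin n)) (t : ℝ),
      deriv (fun s => q (x, s)) t +
        divergence n (fun y => q (y, t) • X (y, t)) x = 0)
    (Z : ℝ → EuclideanSpace ℝ (Fin n))
    (hZ : ∀ t, HasDerivAt Z (X (Z t, t)) t) :
    ∀ t, HasDerivAt (fun s => Real.log (q (Z s, s)))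
      (-(divergence n (fun y => X (y, t)) (Z t))) t := by
  intro t
  set p : EuclideanSpace ℝ (Fin n) × ℝ := (Z t, t) with hp
  have hqd : HasFDerivAt q (fderiv ℝ q p) p :=
    ((hq.differentiable one_ne_zero) p).hasFDerivAt
  -- spatial partial derivative of q
  have hx : HasFDerivAt (fun x : EuclideanSpace ℝ (Fin n) => q (x, t))
      ((fderiv ℝ q p).comp (ContinuousLinearMap.inl ℝ (EuclideanSpace ℝ (Fin n)) ℝ)) (Z t) :=
    hqd.comp (Z t) (hasFDerivAt_prodMk_left (Z t) t)
  -- time partial derivative of q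
  have hpt : HasDerivAt (fun s : ℝ => ((Z t, s) : EuclideanSpace ℝ (Fin n) × ℝ)) ((0 : EuclideanSpace ℝ (Fin n)), (1 : ℝ)) t := by
    simpa using (hasDerivAt_const t (Z t)).prodMk (hasDerivAt_id t)
  have ht : HasDerivAt (fun s => q (Z t, s)) (fderiv ℝ q p (0, 1)) t :=
    hqd.comp_hasDerivAt t hpt
  -- total derivative along the path
  have hpath : HasDerivAt (fun s : ℝ => ((Z s, s) : EuclideanSpace ℝ (Fin n) × ℝ)) (X p, (1:ℝ)) t := by
    simpa using (hZ t).prodMk (hasDerivAt_id t)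
  have hcomp : HasDerivAt (fun s => q (Z s, s)) (fderiv ℝ q p (X p, 1)) t := by
    have := HasFDerivAt.comp_hasDerivAt_of_eq t hqd hpath rfl
    exact this
  have hlog := hcomp.log (ne_of_gt (hqpos p))
  -- continuity equation rewritten
  have hdivsmul : divergence n (fun y => q (y, t) • X (y, t)) (Z t)
      = fderiv ℝ (fun x : EuclideanSpace ℝ (Fin n) => q (x, t)) (Z t) (X p)
        + q p * divergence n (fun y => X (y, t)) (Z t) := by
    exact divergence_smul n _ _ _ hx.differentiableAt ((hX t).differentiable one_ne_zero (Z t))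
  have hteq : deriv (fun s => q (Z t, s)) t = fderiv ℝ q p (0, 1) := ht.deriv
  have hce := hcont (Z t) t
  rw [hteq, hdivsmul, hx.fderiv] at hce
  -- decompose total derivative
  have hdec : fderiv ℝ q p (X p, 1)
      = fderiv ℝ q p (X p, 0) + fderiv ℝ q p (0, 1) := by
    rw [← map_add]; norm_num
  have hXp0 : (fderiv ℝ q p) (X p, (0:ℝ))
      = ((fderiv ℝ q p).comp (ContinuousLinearMap.inl ℝ (EuclideanSpace ℝ (Fin n)) ℝ)) (X p) := by
    simp
  -- finish
  have key : fderiv ℝ q p (X p, 1) / q p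
      = -(divergence n (fun y => X (y, t)) (Z t)) := by
    rw [hdec, hXp0]
    have hq0 : q p ≠ 0 := ne_of_gt (hqpos p)
    field_simp
    linarith [hce]
  rwa [key] at hlog
end
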